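/- In Euclidean space ℝⁿ, the weak Besicovitch covering property holds with a finite constant: there exists L = L(n) such that any finite family of closed balls {B(x_i, r_i)}_{i=1}^k with nonempty common intersection and with x_i ∉ B(x_j, r_j) for all i ≠ j satisfies k ≤ L. -/

import Mathlib

open Metric Besicovitch Finset

lemma key_sep {E : Type*} [NormedAddCommGroup E] [InnerProductSpace ℝ E]
    {a b : E} (ha : a ≠ 0) (hb : b ≠ 0)
    (hab1 : ‖a‖ ≤ ‖a - b‖) (hab2 : ‖b‖ ≤ ‖a - b‖) :
    1 ≤ ‖‖a‖⁻¹ • a - ‖b‖⁻¹ • b‖ := by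
  have hna : (0:ℝ) < ‖a‖ := norm_pos_iff.2 ha
  have hnb : (0:ℝ) < ‖b‖ := norm_pos_iff.2 hb
  have h1 : ‖a - b‖ ^ 2 = ‖a‖ ^ 2 - 2 * (inner ℝ a b : ℝ) + ‖b‖ ^ 2 := norm_sub_sq_real a b
  have h2 : ‖a‖ ^ 2 ≤ ‖a - b‖ ^ 2 := by nlinarith [norm_nonneg (a - b)]
  have h3 : ‖b‖ ^ 2 ≤ ‖a - b‖ ^ 2 := by nlinarith [norm_nonneg (a - b)]
  have h2ab : 2 * (inner ℝ a b : ℝ) ≤ ‖a‖ * ‖b‖ := by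
    rcases le_or_gt (inner ℝ a b : ℝ) 0 with h | h
    · nlinarith
    · nlinarith [mul_le_mul (by nlinarith : 2 * (inner ℝ a b : ℝ) ≤ ‖a‖ ^ 2)
        (by nlinarith : 2 * (inner ℝ a b : ℝ) ≤ ‖b‖ ^ 2) (by linarith) (by positivity)]
  have hu : ‖‖a‖⁻¹ • a‖ = 1 := by
    rw [norm_smul, Real.norm_eq_abs, abs_inv, abs_norm]; field_simp
  have hv : ‖‖b‖⁻¹ • b‖ = 1 := by
    rw [norm_smul, Real.norm_eq_abs, abs_inv, abs_norm]; field_simp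
  have hin : (inner ℝ (‖a‖⁻¹ • a) (‖b‖⁻¹ • b) : ℝ) = ‖a‖⁻¹ * ‖b‖⁻¹ * (inner ℝ a b : ℝ) := by
    rw [real_inner_smul_left, real_inner_smul_right]; ring
  have hsq : ‖‖a‖⁻¹ • a - ‖b‖⁻¹ • b‖ ^ 2
      = 2 - 2 * (‖a‖⁻¹ * ‖b‖⁻¹ * (inner ℝ a b : ℝ)) := by
    rw [norm_sub_sq_real, hu, hv, hin]; ring
  have e : ‖a‖⁻¹ * ‖b‖⁻¹ * (‖a‖ * ‖b‖) = 1 := by field_simp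
  have hinv : (0:ℝ) < ‖a‖⁻¹ * ‖b‖⁻¹ := by positivity
  have : 2 * (‖a‖⁻¹ * ‖b‖⁻¹ * (inner ℝ a b : ℝ)) ≤ 1 := by nlinarith
  nlinarith [norm_nonneg (‖a‖⁻¹ • a - ‖b‖⁻¹ • b), hsq]

theorem wbcp_euclidean (n : ℕ) :
    ∃ L : ℕ, ∀ (k : ℕ) (x : Fin k → EuclideanSpace ℝ (Fin n)) (r : Fin k → ℝ)
      (y : EuclideanSpace ℝ (Fin n)),
      (∀ i, dist y (x i) ≤ r i) →
      (∀ i j, i ≠ j → r j < dist (x i) (x j)) →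
      k ≤ L := by
  set E := EuclideanSpace ℝ (Fin n)
  refine ⟨multiplicity E + 1, fun k x r y hy h => ?_⟩
  set u : Fin k → E := fun i => ‖x i - y‖⁻¹ • (x i - y) with hu
  -- distances from y are dominated by mutual distances
  have key : ∀ i j : Fin k, i ≠ j → x i ≠ y → x j ≠ y → 1 ≤ ‖u i - u j‖ := by
    intro i j hij hxi hxj
    have ha : x i - y ≠ 0 := sub_ne_zero.2 hxi
    have hb : x j - y ≠ 0 := sub_ne_zero.2 hxj
    have hab : (x i - y) - (x j - y) = x i - x j := by abel
    have h1 : ‖x i - y‖ ≤ ‖(x i - y) - (x j - y)‖ := by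
      rw [hab]
      calc ‖x i - y‖ = dist y (x i) := by rw [dist_eq_norm, norm_sub_rev]
        _ ≤ r i := hy i
        _ ≤ dist (x j) (x i) := (h j i (Ne.symm hij)).le
        _ = ‖x i - x j‖ := by rw [dist_eq_norm, norm_sub_rev]
    have h2 : ‖x j - y‖ ≤ ‖(x i - y) - (x j - y)‖ := by
      rw [hab]
      calc ‖x j - y‖ = dist y (x j) := by rw [dist_eq_norm, norm_sub_rev]
        _ ≤ r j := hy j
        _ ≤ dist (x i) (x j) := (h i j hij).le
        _ = ‖x i - x j‖ := dist_eq_norm _ _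
    exact key_sep ha hb h1 h2
  -- at most one center coincides with y
  classical
  set S : Finset (Fin k) := univ.filter fun i => x i ≠ y with hS
  have hScard : k ≤ S.card + 1 := by
    have : Sᶜ.card ≤ 1 := by
      rw [Finset.card_le_one]
      intro i hi j hj
      simp only [hS, Finset.mem_compl, Finset.mem_filter, Finset.mem_univ, true_and,
        not_not] at hi hj
      by_contra hij
      have := h i j hij
      rw [hi, hj, dist_self] at this
      have := hy j
      rw [hj, dist_self] at this
      linarith
    have := Finset.card_add_card_compl S
    simp only [Fintype.card_fin] at this
    omega
  -- the normalized points
  set s : Finset E := S.image u with hs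
  have hcard : S.card = s.card := by
    rw [hs]
    refine (Finset.card_image_of_injOn fun i hi j hj hijeq => ?_).symm
    by_contra hij
    simp only [hS, Finset.coe_filter, Set.mem_setOf_eq] at hi hj
    have := key i j hij hi.2 hj.2
    rw [hijeq, sub_self, norm_zero] at this
    linarith
  have hmul : s.card ≤ multiplicity E := by
    apply card_le_multiplicity
    · intro c hc
      rw [hs] at hc
      obtain ⟨i, hi, rfl⟩ := Finset.mem_image.1 hc
      simp only [hS, Finset.mem_filter] at hi
      have : x i - y ≠ 0 := sub_ne_zero.2 hi.2
      rw [hu]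
      simp only
      rw [norm_smul, Real.norm_eq_abs, abs_inv, abs_norm]
      rw [inv_mul_cancel₀ (norm_ne_zero_iff.2 this)]
      norm_num
    · intro c hc d hd hcd
      rw [hs] at hc hd
      obtain ⟨i, hi, rfl⟩ := Finset.mem_image.1 hc
      obtain ⟨j, hj, rfl⟩ := Finset.mem_image.1 hd
      simp only [hS, Finset.mem_filter] at hi hj
      have hij : i ≠ j := fun hh => hcd (by rw [hh])
      exact key i j hij hi.2 hj.2
  omega
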